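/- Let M be an n×n matrix over a field F, let G and H be invertible upper triangular n×n matrices, and define a pivot of a matrix N to be a pair (i,j) such that N_{i,j} ≠ 0 and N_{k,l} = 0 whenever k ≥ i, l ≥ j, and (k,l) ≠ (i,j). Then every pivot of M is a pivot of G·M·Hᵀ. -/
import Mathlib


open Matrix

namespace SchubertCell

/-- The strict down-set of a subset of a poset. -/
def Down {X : Type*} [Preorder X] (Y : Set X) : Set X := {x | ∃ y ∈ Y, x < y}

variable {F : Type*} [Field F] {n : ℕ}

/-- The pivot-set of a matrix: the maximal elements of the support
under the componentwise (product) order on indices. -/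
def Piv (M : Matrix (Fin n) (Fin n) F) : Set (Fin n × Fin n) :=
  {p | M p.1 p.2 ≠ 0 ∧ ∀ q : Fin n × Fin n, p < q → M q.1 q.2 = 0}

/-- Upper triangular matrix. -/
def UpperTri (G : Matrix (Fin n) (Fin n) F) : Prop := ∀ i j : Fin n, j < i → G i j = 0

/-- `M i j` is the last (largest row index) nonzero entry of column `j`. -/
def IsLast (M : Matrix (Fin n) (Fin n) F) (i j : Fin n) : Prop :=
  M i j ≠ 0 ∧ ∀ i' : Fin n, i < i' → M i' j = 0

/-- Reduced reverse column echelon form: (CE1), (CE2), (CE3). -/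
def IsRRCEF (M : Matrix (Fin n) (Fin n) F) : Prop :=
  (∀ j j' : Fin n, j ≤ j' → (∃ i, M i j' ≠ 0) → ∃ i, M i j ≠ 0) ∧
  (∀ i j i' j' : Fin n, IsLast M i j → IsLast M i' j' → j < j' → i' < i) ∧
  (∀ i j : Fin n, IsLast M i j → M i j = 1 ∧ ∀ j' : Fin n, j' ≠ j → M i j' = 0)

/-- `D(α)`: elements of the strict down-set of `α` whose row contains no element of `α`. -/
def DSet (α : Set (Fin n × Fin n)) : Set (Fin n × Fin n) :=
  {p | p ∈ Down α ∧ ∀ k : Fin n, (p.1, k) ∉ α}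

theorem pivot_subset_of_triangular_action {F : Type*} [Field F] {n : ℕ}
    (M G H : Matrix (Fin n) (Fin n) F)
    (hG : IsUnit G) (hH : IsUnit H) (hGt : UpperTri G) (hHt : UpperTri H) :
    Piv M ⊆ Piv (G * M * Hᵀ) := by
  have hdiag : ∀ (A : Matrix (Fin n) (Fin n) F), IsUnit A → UpperTri A →
      ∀ k, A k k ≠ 0 := by
    intro A hA hAt k hk
    have hbt : A.BlockTriangular id := fun i j h => hAt i j h
    have hdet : A.det ≠ 0 := by
      have := (Matrix.isUnit_iff_isUnit_det A).mp hA
      exact isUnit_iff_ne_zero.mp this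
    rw [Matrix.det_of_upperTriangular hbt] at hdet
    exact hdet (Finset.prod_eq_zero (Finset.mem_univ k) hk)
  rintro ⟨i, j⟩ ⟨hne, hmax⟩
  have hentry : ∀ k l : Fin n, i ≤ k → j ≤ l →
      (G * M * Hᵀ) k l = G k i * M i j * H l j := by
    intro k l hk hl
    have expand : (G * M * Hᵀ) k l = ∑ b, ∑ a, G k a * M a b * H l b := by
      simp [Matrix.mul_apply, Matrix.transpose_apply, Finset.sum_mul]
    rw [expand, Finset.sum_eq_single j]
    · rw [Finset.sum_eq_single i]
      · intro a _ ha
        by_cases hak : a < k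
        · rw [hGt k a hak, zero_mul, zero_mul]
        · push_neg at hak
          have hlt : (i, j) < (a, j) := by
            refine Prod.lt_iff.mpr (Or.inl ⟨lt_of_le_of_ne (hk.trans hak) ?_, le_refl j⟩)
            exact fun h => ha h.symm
          rw [hmax ⟨a, j⟩ hlt, mul_zero, zero_mul]
      · intro h; exact absurd (Finset.mem_univ i) h
    · intro b _ hb
      by_cases hbl : b < l
      · simp [hHt l b hbl]
      · push_neg at hbl
        apply Finset.sum_eq_zero
        intro a _
        by_cases hak : a < k
        · rw [hGt k a hak, zero_mul, zero_mul]
        · push_neg at hak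
          have hlt : (i, j) < (a, b) := by
            refine Prod.lt_iff.mpr (Or.inr ⟨hk.trans hak, lt_of_le_of_ne (hl.trans hbl) ?_⟩)
            exact fun h => hb h.symm
          rw [hmax ⟨a, b⟩ hlt, mul_zero, zero_mul]
    · intro h; exact absurd (Finset.mem_univ j) h
  constructor
  · rw [hentry i j le_rfl le_rfl]
    exact mul_ne_zero (mul_ne_zero (hdiag G hG hGt i) hne) (hdiag H hH hHt j)
  · rintro ⟨k, l⟩ hlt
    have hk : i ≤ k := hlt.le.1
    have hl : j ≤ l := hlt.le.2
    rw [hentry k l hk hl]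
    rcases Prod.lt_iff.mp hlt with ⟨h1, _⟩ | ⟨_, h2⟩
    · rw [hGt k i h1, zero_mul, zero_mul]
    · rw [hHt l j h2, mul_zero]
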